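/- For all a ≥ 1 and b ≥ 1, the Toads and Frogs position L T^a □ (TF)^b, where L is any finite sequence over {T,F} ending in F, has game value { a−1 | (1/2)^{b−1} }. -/

import Mathlib

universe u

namespace SetTheory

/-- Pre-games (removed from Mathlib; restated with their Mathlib (2024) meaning). -/
inductive PGame : Type (u + 1)
  | mk : ∀ α β : Type u, (α → PGame) → (β → PGame) → PGame

namespace PGame

/-- Simultaneous definition of `x ≤ y` (first) and `x ⧏ y` (second). -/
noncomputable def leLf : PGame.{u} → PGame.{u} → Prop × Prop
  | mk _ _ xL xR => fun y =>
    PGame.rec (motive := fun _ => Prop × Prop)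
      (fun yl yr yL yR ihL ihR =>
        ((∀ i, (leLf (xL i) (mk yl yr yL yR)).2) ∧ ∀ j, (ihR j).2,
         (∃ i, (ihL i).1) ∨ ∃ j, (leLf (xR j) (mk yl yr yL yR)).1)) y

instance : LE PGame.{u} := ⟨fun x y => (leLf x y).1⟩

instance : HasEquiv PGame.{u} := ⟨fun x y => x ≤ y ∧ y ≤ x⟩

instance : Zero PGame.{u} := ⟨mk PEmpty PEmpty PEmpty.elim PEmpty.elim⟩

instance : One PGame.{u} := ⟨mk PUnit PEmpty (fun _ => 0) PEmpty.elim⟩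

def neg : PGame.{u} → PGame.{u}
  | mk l r L R => mk r l (fun i => neg (R i)) (fun i => neg (L i))

instance : Neg PGame.{u} := ⟨neg⟩

def powHalf : ℕ → PGame.{u}
  | 0 => 1
  | n + 1 => mk PUnit PUnit (fun _ => 0) (fun _ => powHalf n)

end PGame

end SetTheory

open SetTheory

inductive Cell : Type
  | T | F | E
deriving DecidableEq

/-- Positions reachable from `l` by a single Toad (Left) move:
a Toad steps right into an empty square, or jumps over one adjacent Frog
into the empty square beyond. -/
def toadMoves : List Cell → List (List Cell)
  | [] => []
  | c :: rest =>
    (match c, rest with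
     | Cell.T, Cell.E :: r => [Cell.E :: Cell.T :: r]
     | Cell.T, Cell.F :: Cell.E :: r => [Cell.E :: Cell.F :: Cell.T :: r]
     | _, _ => []) ++ (toadMoves rest).map (c :: ·)

/-- Positions reachable from `l` by a single Frog (Right) move. -/
def frogMoves : List Cell → List (List Cell)
  | [] => []
  | c :: rest =>
    (match c, rest with
     | Cell.E, Cell.F :: r => [Cell.F :: Cell.E :: r]
     | Cell.E, Cell.T :: Cell.F :: r => [Cell.F :: Cell.T :: Cell.E :: r]
     | _, _ => []) ++ (frogMoves rest).map (c :: ·)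

/-- A weight which strictly decreases with every legal move: each Toad
contributes the number of squares strictly to its right, each Frog the number
of squares strictly to its left. -/
def wt : List Cell → ℕ
  | [] => 0
  | c :: rest =>
    (if c = Cell.T then rest.length else 0) + rest.countP (· = Cell.F) + wt rest

/-- Game tree with fuel; since `wt` strictly decreases along moves and
positions of weight `0` have no moves, `gameAux n l` is the true game
tree of `l` whenever `wt l ≤ n`. -/
def gameAux : ℕ → List Cell → PGame
  | 0, _ => 0
  | n + 1, l =>
    PGame.mk {m // m ∈ toadMoves l} {m // m ∈ frogMoves l}
      (fun m => gameAux n m.1) (fun m => gameAux n m.1)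

/-- The game (PGame) associated to a Toads and Frogs position. -/
def tfGame (l : List Cell) : PGame := gameAux (wt l + 1) l

/-- The game `{x | y}` with a single Left option `x` and single Right option `y`. -/
def gmk (x y : PGame) : PGame :=
  PGame.mk PUnit PUnit (fun _ => x) (fun _ => y)

/-- The canonical game of a natural number. -/
def natGame : ℕ → PGame
  | 0 => 0
  | n + 1 => PGame.mk PUnit PEmpty (fun _ => natGame n) (fun x => x.elim)

/-- The canonical game of an integer. -/
def intGame : ℤ → PGame
  | Int.ofNat n => natGame n
  | Int.negSucc n => -natGame (n + 1)

/-- `(TF)^b` : the block `TF` repeated `b` times. -/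
def tfBlock (b : ℕ) : List Cell := (List.replicate b [Cell.T, Cell.F]).flatten

def tmatch : Cell → List Cell → List (List Cell)
  | Cell.T, Cell.E :: r => [Cell.E :: Cell.T :: r]
  | Cell.T, Cell.F :: Cell.E :: r => [Cell.E :: Cell.F :: Cell.T :: r]
  | _, _ => []
def fmatch : Cell → List Cell → List (List Cell)
  | Cell.E, Cell.F :: r => [Cell.F :: Cell.E :: r]
  | Cell.E, Cell.T :: Cell.F :: r => [Cell.F :: Cell.T :: Cell.E :: r]
  | _, _ => []
lemma toadMoves_cons (c : Cell) (rest : List Cell) :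
    toadMoves (c :: rest) = tmatch c rest ++ (toadMoves rest).map (c :: ·) := rfl
lemma frogMoves_cons (c : Cell) (rest : List Cell) :
    frogMoves (c :: rest) = fmatch c rest ++ (frogMoves rest).map (c :: ·) := rfl
lemma fmatch_ne_E {c : Cell} (h : c ≠ Cell.E) (rest : List Cell) : fmatch c rest = [] := by
  cases c with
  | E => exact absurd rfl h
  | T => rfl
  | F => rfl
lemma frog_append (L s : List Cell) (h : Cell.E ∉ L) :
    frogMoves (L ++ s) = (frogMoves s).map (L ++ ·) := by
  induction L with
  | nil => simp
  | cons c L ih =>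
    have hc : c ≠ Cell.E := by rintro rfl; simp at h
    have hE : Cell.E ∉ L := fun h' => h (List.mem_cons_of_mem c h')
    rw [List.cons_append, frogMoves_cons, ih hE, fmatch_ne_E hc]
    simp [Function.comp_def]
lemma tmatch_eval (c : Cell) (rest : List Cell)
    (h : ¬ (c = Cell.T ∧ ((∃ r, rest = Cell.E :: r) ∨ ∃ r, rest = Cell.F :: Cell.E :: r))) :
    tmatch c rest = [] := by
  cases c with
  | E => rfl
  | F => rfl
  | T =>
    rcases rest with _ | ⟨d, rest⟩
    · rfl
    · cases d with
      | E => exact absurd ⟨rfl, Or.inl ⟨rest, rfl⟩⟩ h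
      | T => rfl
      | F =>
        rcases rest with _ | ⟨e, rest⟩
        · rfl
        · cases e with
          | E => exact absurd ⟨rfl, Or.inr ⟨rest, rfl⟩⟩ h
          | T => rfl
          | F => rfl
lemma toad_append (L s : List Cell) (h : Cell.E ∉ L)
    (hs : s = [] ∨ ∃ t, s = Cell.T :: t) :
    toadMoves (L ++ s) = (toadMoves s).map (L ++ ·) := by
  induction L with
  | nil => simp
  | cons c L ih =>
    have hc : c ≠ Cell.E := by rintro rfl; simp at h
    have hE : Cell.E ∉ L := fun h' => h (List.mem_cons_of_mem c h')
    rw [List.cons_append, toadMoves_cons, ih hE]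
    rw [tmatch_eval]
    · simp [Function.comp_def]
    · rintro ⟨rfl, (⟨r, hr⟩ | ⟨r, hr⟩)⟩
      · rcases L with _ | ⟨d, L'⟩
        · rcases hs with rfl | ⟨t, rfl⟩ <;> simp_all
        · rw [List.cons_append] at hr
          injection hr with h1 _
          subst h1; simp at h
      · rcases L with _ | ⟨d, L'⟩
        · rcases hs with rfl | ⟨t, rfl⟩ <;> simp_all
        · rw [List.cons_append] at hr
          injection hr with h1 h2
          rcases L' with _ | ⟨e, L''⟩
          · rcases hs with rfl | ⟨t, rfl⟩ <;> simp_all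
          · rw [List.cons_append] at h2
            injection h2 with h3 _
            subst h3; simp at h
lemma toad_append_E (L r : List Cell) (h : Cell.E ∉ L) (hF : L.getLast? = some Cell.F) :
    toadMoves (L ++ Cell.E :: r) = (toadMoves (Cell.E :: r)).map (L ++ ·) ∨
    ∃ M, Cell.E ∉ M ∧ L = M ++ [Cell.T, Cell.F] ∧
      toadMoves (L ++ Cell.E :: r) =
        (M ++ Cell.E :: Cell.F :: Cell.T :: r) ::
          (toadMoves (Cell.E :: r)).map (L ++ ·) := by
  induction L with
  | nil => simp at hF
  | cons c L ih =>
    have hc : c ≠ Cell.E := by rintro rfl; simp at h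
    have hE : Cell.E ∉ L := fun h' => h (List.mem_cons_of_mem c h')
    rcases L with _ | ⟨d, L0⟩
    · -- L = [c], c = F
      simp at hF; subst hF
      left
      rw [List.cons_append, toadMoves_cons, List.nil_append]
      rw [tmatch_eval Cell.F _ (by rintro ⟨h', -⟩; cases h')]
      simp [Function.comp_def]
    · have hF' : (d :: L0).getLast? = some Cell.F := by
        rwa [List.getLast?_cons_cons] at hF
      have hd : d ≠ Cell.E := by rintro rfl; simp at h
      rcases ih hE hF' with hmain | ⟨M, hME, hMeq, hmain⟩
      · -- no deep crossing move
        by_cases hTF : c = Cell.T ∧ d = Cell.F ∧ L0 = []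
        · -- L = [T, F] : new crossing jump
          obtain ⟨rfl, rfl, rfl⟩ := hTF
          right
          refine ⟨[], by simp, by simp, ?_⟩
          rw [List.cons_append, toadMoves_cons, hmain]
          rw [show tmatch Cell.T ([Cell.F] ++ Cell.E :: r) = [Cell.E :: Cell.F :: Cell.T :: r] from rfl]
          simp [Function.comp_def, toadMoves_cons]
        · left
          rw [List.cons_append, toadMoves_cons, hmain]
          rw [tmatch_eval]
          · simp [Function.comp_def]
          · rintro ⟨rfl, (⟨r', hr⟩ | ⟨r', hr⟩)⟩
            · rw [List.cons_append] at hr; injection hr with h1 _; exact hd h1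
            · rw [List.cons_append] at hr; injection hr with h1 h2
              rcases L0 with _ | ⟨e, L1⟩
              · exact hTF ⟨rfl, h1, rfl⟩
              · rw [List.cons_append] at h2; injection h2 with h3 _
                subst h3; simp at h
      · -- deep crossing move exists; lift it
        right
        refine ⟨c :: M, by simp [hME]; rintro rfl; simp at h, by simp [hMeq], ?_⟩
        rw [List.cons_append, toadMoves_cons, hmain]
        rw [tmatch_eval]
        · simp [Function.comp_def]
        · rintro ⟨rfl, (⟨r', hr⟩ | ⟨r', hr⟩)⟩
          · rw [List.cons_append] at hr; injection hr with h1 _; exact hd h1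
          · rw [List.cons_append] at hr; injection hr with h1 h2
            rcases L0 with _ | ⟨e, L1⟩
            · -- d :: [] = M ++ [T,F] impossible by length
              simpa using congrArg List.length hMeq
            · rw [List.cons_append] at h2; injection h2 with h3 _
              subst h3; simp at h
abbrev rep (a : ℕ) : List Cell := List.replicate a Cell.T
lemma tfBlock_succ (b : ℕ) : tfBlock (b+1) = Cell.T :: Cell.F :: tfBlock b := by
  simp [tfBlock, List.replicate_succ]
lemma tfBlock_zero : tfBlock 0 = [] := rfl
lemma E_not_mem_tfBlock (b : ℕ) : Cell.E ∉ tfBlock b := by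
  induction b with
  | zero => simp [tfBlock_zero]
  | succ b ih => simp [tfBlock_succ]; exact ih
lemma E_not_mem_rep (a : ℕ) : Cell.E ∉ rep a := by simp [rep]
lemma tfBlock_shape (b : ℕ) : tfBlock b = [] ∨ ∃ t, tfBlock b = Cell.T :: t := by
  cases b with
  | zero => exact Or.inl rfl
  | succ b => exact Or.inr ⟨_, tfBlock_succ b⟩
lemma rep_tf_shape (c b : ℕ) :
    rep c ++ tfBlock b = [] ∨ ∃ t, rep c ++ tfBlock b = Cell.T :: t := by
  cases c with
  | zero => simpa using tfBlock_shape b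
  | succ c => exact Or.inr ⟨List.replicate c Cell.T ++ tfBlock b, by simp [rep, List.replicate_succ]⟩
lemma toadMoves_tfBlock (b : ℕ) : toadMoves (tfBlock b) = [] := by
  induction b with
  | zero => rfl
  | succ b ih =>
    rw [tfBlock_succ, toadMoves_cons, toadMoves_cons, ih]
    rcases tfBlock_shape b with h | ⟨t, h⟩ <;>
      simp [h, tmatch]
lemma frogMoves_tfBlock (b : ℕ) : frogMoves (tfBlock b) = [] := by
  induction b with
  | zero => rfl
  | succ b ih =>
    rw [tfBlock_succ, frogMoves_cons, frogMoves_cons, ih]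
    simp [fmatch]
lemma toadMoves_rep_tf (c b : ℕ) : toadMoves (rep c ++ tfBlock b) = [] := by
  rw [toad_append _ _ (E_not_mem_rep c) (tfBlock_shape b), toadMoves_tfBlock]
  rfl
lemma frogMoves_rep_tf (c b : ℕ) : frogMoves (rep c ++ tfBlock b) = [] := by
  rw [frog_append (rep c) (tfBlock b) (E_not_mem_rep c), frogMoves_tfBlock]
  rfl

/-- no frog moves in `E (T^{c+1}) (TF)^b` -/
lemma frogMoves_E_rep (c b : ℕ) :
    frogMoves (Cell.E :: (rep (c+1) ++ tfBlock b)) = [] := by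
  rw [frogMoves_cons, frogMoves_rep_tf]
  have : rep (c+1) ++ tfBlock b = Cell.T :: (rep c ++ tfBlock b) := by
    simp [rep, List.replicate_succ]
  rw [this]
  rcases rep_tf_shape c b with h | ⟨t, h⟩ <;> simp [h, fmatch]

/-- toad moves of `E :: z` -/
lemma toadMoves_E (z : List Cell) :
    toadMoves (Cell.E :: z) = (toadMoves z).map (Cell.E :: ·) := by
  rw [toadMoves_cons]; rfl

/-- toad moves of `T^{a+1} E :: z` when z has no toad moves and doesn't start with F,E -/
lemma toadMoves_rep_E (a : ℕ) (z : List Cell) (hz : toadMoves z = [])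
    (hz2 : ∀ r, z ≠ Cell.F :: Cell.E :: r) :
    toadMoves (rep (a+1) ++ Cell.E :: z) = [rep a ++ Cell.E :: Cell.T :: z] := by
  induction a with
  | zero =>
    rw [show rep 1 ++ Cell.E :: z = Cell.T :: Cell.E :: z by simp [rep]]
    rw [toadMoves_cons, toadMoves_E, hz]
    rw [show tmatch Cell.T (Cell.E :: z) = [Cell.E :: Cell.T :: z] from rfl]
    simp [rep]
  | succ a ih =>
    rw [show rep (a+2) ++ Cell.E :: z = Cell.T :: (rep (a+1) ++ Cell.E :: z) by
      simp [rep, List.replicate_succ]]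
    rw [toadMoves_cons, ih]
    rw [tmatch_eval]
    · simp [rep, List.replicate_succ]
    · rintro ⟨-, (⟨r, hr⟩ | ⟨r, hr⟩)⟩
      · rw [show rep (a+1) ++ Cell.E :: z = Cell.T :: (rep a ++ Cell.E :: z) by
          simp [rep, List.replicate_succ]] at hr
        cases hr
      · rw [show rep (a+1) ++ Cell.E :: z = Cell.T :: (rep a ++ Cell.E :: z) by
          simp [rep, List.replicate_succ]] at hr
        cases hr

/-- frog moves of `E :: (TF)^{b+1}` : single jump -/
lemma frogMoves_E_tf (b : ℕ) :
    frogMoves (Cell.E :: tfBlock (b+1)) =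
      [Cell.F :: Cell.T :: Cell.E :: tfBlock b] := by
  rw [tfBlock_succ, frogMoves_cons]
  rw [show fmatch Cell.E (Cell.T :: Cell.F :: tfBlock b) =
    [Cell.F :: Cell.T :: Cell.E :: tfBlock b] from rfl]
  rw [show Cell.T :: Cell.F :: tfBlock b = tfBlock (b+1) from (tfBlock_succ b).symm,
    frogMoves_tfBlock]
  rfl
lemma frogMoves_E_nil : frogMoves [Cell.E] = [] := rfl
lemma wt_cons (c : Cell) (rest : List Cell) :
    wt (c :: rest) =
      (if c = Cell.T then rest.length else 0) + rest.countP (· = Cell.F) + wt rest := rfl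
lemma tmatch_mem {c : Cell} {rest m : List Cell} (h : m ∈ tmatch c rest) :
    (c = Cell.T ∧ ∃ r, rest = Cell.E :: r ∧ m = Cell.E :: Cell.T :: r) ∨
    (c = Cell.T ∧ ∃ r, rest = Cell.F :: Cell.E :: r ∧ m = Cell.E :: Cell.F :: Cell.T :: r) := by
  cases c with
  | E => simp [tmatch] at h
  | F => simp [tmatch] at h
  | T =>
    rcases rest with _ | ⟨d, rest⟩
    · simp [tmatch] at h
    · cases d with
      | E =>
        left
        refine ⟨rfl, rest, rfl, ?_⟩
        simpa [tmatch] using h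
      | T => simp [tmatch] at h
      | F =>
        rcases rest with _ | ⟨e, rest⟩
        · simp [tmatch] at h
        · cases e with
          | E =>
            right
            refine ⟨rfl, rest, rfl, ?_⟩
            simpa [tmatch] using h
          | T => simp [tmatch] at h
          | F => simp [tmatch] at h
lemma fmatch_mem {c : Cell} {rest m : List Cell} (h : m ∈ fmatch c rest) :
    (c = Cell.E ∧ ∃ r, rest = Cell.F :: r ∧ m = Cell.F :: Cell.E :: r) ∨
    (c = Cell.E ∧ ∃ r, rest = Cell.T :: Cell.F :: r ∧ m = Cell.F :: Cell.T :: Cell.E :: r) := by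
  cases c with
  | T => simp [fmatch] at h
  | F => simp [fmatch] at h
  | E =>
    rcases rest with _ | ⟨d, rest⟩
    · simp [fmatch] at h
    · cases d with
      | F =>
        left
        refine ⟨rfl, rest, rfl, ?_⟩
        simpa [fmatch] using h
      | E => simp [fmatch] at h
      | T =>
        rcases rest with _ | ⟨e, rest⟩
        · simp [fmatch] at h
        · cases e with
          | F =>
            right
            refine ⟨rfl, rest, rfl, ?_⟩
            simpa [fmatch] using h
          | T => simp [fmatch] at h
          | E => simp [fmatch] at h
lemma move_spec : ∀ (l m : List Cell), (m ∈ toadMoves l ∨ m ∈ frogMoves l) →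
    m.length = l.length ∧ m.countP (· = Cell.F) = l.countP (· = Cell.F) ∧ wt m < wt l := by
  intro l
  induction l with
  | nil => intro m hm; rcases hm with h | h <;> simp [toadMoves, frogMoves] at h
  | cons c rest ih =>
    intro m hm
    have hm' : m ∈ tmatch c rest ∨ m ∈ fmatch c rest ∨
        ∃ m', (m' ∈ toadMoves rest ∨ m' ∈ frogMoves rest) ∧ m = c :: m' := by
      rcases hm with h | h
      · rw [toadMoves_cons, List.mem_append] at h
        rcases h with h | h
        · exact Or.inl h
        · rcases List.mem_map.1 h with ⟨m', hm', rfl⟩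
          exact Or.inr (Or.inr ⟨m', Or.inl hm', rfl⟩)
      · rw [frogMoves_cons, List.mem_append] at h
        rcases h with h | h
        · exact Or.inr (Or.inl h)
        · rcases List.mem_map.1 h with ⟨m', hm', rfl⟩
          exact Or.inr (Or.inr ⟨m', Or.inr hm', rfl⟩)
    rcases hm' with h | h | ⟨m', hm', rfl⟩
    · rcases tmatch_mem h with ⟨rfl, r, rfl, rfl⟩ | ⟨rfl, r, rfl, rfl⟩ <;>
        simp [wt_cons, List.countP_cons] <;> omega
    · rcases fmatch_mem h with ⟨rfl, r, rfl, rfl⟩ | ⟨rfl, r, rfl, rfl⟩ <;>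
        simp [wt_cons, List.countP_cons] <;> omega
    · obtain ⟨hlen, hcount, hwt⟩ := ih m' hm'
      refine ⟨by simp [hlen], by simp [List.countP_cons, hcount], ?_⟩
      rw [wt_cons, wt_cons, hlen, hcount]
      omega
namespace SetTheory
namespace PGame

def LF (x y : PGame.{u}) : Prop := (leLf x y).2

def LeftMoves : PGame.{u} → Type u
  | mk l _ _ _ => l

def RightMoves : PGame.{u} → Type u
  | mk _ r _ _ => r

def moveLeft : (x : PGame.{u}) → LeftMoves x → PGame.{u}
  | mk _ _ L _ => L

def moveRight : (x : PGame.{u}) → RightMoves x → PGame.{u}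
  | mk _ _ _ R => R

theorem mk_le_mk {xl xr : Type u} {xL : xl → PGame.{u}} {xR : xr → PGame.{u}}
    {yl yr : Type u} {yL : yl → PGame.{u}} {yR : yr → PGame.{u}} :
    mk xl xr xL xR ≤ mk yl yr yL yR ↔
      (∀ i, LF (xL i) (mk yl yr yL yR)) ∧ ∀ j, LF (mk xl xr xL xR) (yR j) := Iff.rfl

theorem lf_mk {xl xr : Type u} {xL : xl → PGame.{u}} {xR : xr → PGame.{u}}
    {yl yr : Type u} {yL : yl → PGame.{u}} {yR : yr → PGame.{u}} :
    LF (mk xl xr xL xR) (mk yl yr yL yR) ↔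
      (∃ i, mk xl xr xL xR ≤ yL i) ∨ ∃ j, xR j ≤ mk yl yr yL yR := Iff.rfl

theorem trans_aux (x : PGame.{u}) : ∀ y z : PGame.{u},
    (x ≤ y → y ≤ z → x ≤ z) ∧ (x ≤ y → LF y z → LF x z) ∧ (LF x y → y ≤ z → LF x z) := by
  induction x with
  | mk xl xr xL xR ihxL ihxR =>
  intro y
  induction y with
  | mk yl yr yL yR ihyL ihyR =>
  intro z
  induction z with
  | mk zl zr zL zR ihzL ihzR =>
  refine ⟨fun hxy hyz => ?_, fun hxy hyz => ?_, fun hxy hyz => ?_⟩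
  · exact mk_le_mk.2 ⟨fun i => (ihxL i _ _).2.2 ((mk_le_mk.1 hxy).1 i) hyz,
      fun j => (ihzR j).2.1 hxy ((mk_le_mk.1 hyz).2 j)⟩
  · rcases lf_mk.1 hyz with ⟨i, h⟩ | ⟨j, h⟩
    · exact lf_mk.2 (Or.inl ⟨i, (ihzL i).1 hxy h⟩)
    · exact (ihyR j (mk zl zr zL zR)).2.2 ((mk_le_mk.1 hxy).2 j) h
  · rcases lf_mk.1 hxy with ⟨i, h⟩ | ⟨j, h⟩
    · exact (ihyL i (mk zl zr zL zR)).2.1 h ((mk_le_mk.1 hyz).1 i)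
    · exact lf_mk.2 (Or.inr ⟨j, (ihxR j _ _).1 h hyz⟩)

theorem lf_of_le_of_lf {x y z : PGame.{u}} (h1 : x ≤ y) (h2 : LF y z) : LF x z :=
  (trans_aux x y z).2.1 h1 h2

theorem lf_of_lf_of_le {x y z : PGame.{u}} (h1 : LF x y) (h2 : y ≤ z) : LF x z :=
  (trans_aux x y z).2.2 h1 h2

theorem lf_of_le_moveLeft {x y : PGame.{u}} {i : y.LeftMoves} (h : x ≤ y.moveLeft i) :
    LF x y := by
  cases x with
  | mk xl xr xL xR =>
  cases y with
  | mk yl yr yL yR => exact lf_mk.2 (Or.inl ⟨i, h⟩)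

theorem lf_of_moveRight_le {x y : PGame.{u}} {j : x.RightMoves} (h : x.moveRight j ≤ y) :
    LF x y := by
  cases x with
  | mk xl xr xL xR =>
  cases y with
  | mk yl yr yL yR => exact lf_mk.2 (Or.inr ⟨j, h⟩)

theorem le_rfl_aux (x : PGame.{u}) : x ≤ x := by
  induction x with
  | mk l r L R ihL ihR =>
    exact mk_le_mk.2 ⟨fun i => lf_of_le_moveLeft (y := mk l r L R) (i := i) (ihL i),
      fun j => lf_of_moveRight_le (x := mk l r L R) (j := j) (ihR j)⟩

theorem moveLeft_lf {x : PGame.{u}} (i : x.LeftMoves) : LF (x.moveLeft i) x :=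
  lf_of_le_moveLeft (le_rfl_aux _)

theorem lf_moveRight {x : PGame.{u}} (j : x.RightMoves) : LF x (x.moveRight j) :=
  lf_of_moveRight_le (le_rfl_aux _)

theorem lf_zero_aux {y : PGame.{u}} : LF y 0 ↔ ∃ j, y.moveRight j ≤ 0 := by
  cases y with
  | mk l r L R =>
  show LF (mk l r L R) (mk PEmpty PEmpty PEmpty.elim PEmpty.elim) ↔ _
  rw [lf_mk]
  constructor
  · rintro (⟨i, _⟩ | ⟨j, h⟩)
    · exact i.elim
    · exact ⟨j, h⟩
  · rintro ⟨j, h⟩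
    exact Or.inr ⟨j, h⟩

theorem le_zero {x : PGame.{u}} : x ≤ 0 ↔ ∀ i, ∃ j, (x.moveLeft i).moveRight j ≤ 0 := by
  cases x with
  | mk l r L R =>
  show mk l r L R ≤ mk PEmpty PEmpty PEmpty.elim PEmpty.elim ↔ _
  rw [mk_le_mk]
  constructor
  · rintro ⟨h, -⟩ i
    exact lf_zero_aux.1 (h i)
  · intro h
    exact ⟨fun i => lf_zero_aux.2 (h i), fun j => j.elim⟩

end PGame
end SetTheory

lemma mk_equiv_mk {α β α' β' : Type} {xL : α → PGame} {xR : β → PGame}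
    {yL : α' → PGame} {yR : β' → PGame}
    (h1 : ∀ i, ∃ i', xL i ≈ yL i') (h2 : ∀ i', ∃ i, xL i ≈ yL i')
    (h3 : ∀ j, ∃ j', xR j ≈ yR j') (h4 : ∀ j', ∃ j, xR j ≈ yR j') :
    PGame.mk α β xL xR ≈ PGame.mk α' β' yL yR := by
  constructor
  · rw [PGame.mk_le_mk]
    refine ⟨fun i => ?_, fun j' => ?_⟩
    · obtain ⟨i', hi⟩ := h1 i
      exact PGame.lf_of_le_of_lf hi.1 (PGame.moveLeft_lf (x := PGame.mk α' β' yL yR) i')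
    · obtain ⟨j, hj⟩ := h4 j'
      exact PGame.lf_of_moveRight_le (x := PGame.mk α β xL xR) (j := j) hj.1
  · rw [PGame.mk_le_mk]
    refine ⟨fun i' => ?_, fun j => ?_⟩
    · obtain ⟨i, hi⟩ := h2 i'
      exact PGame.lf_of_le_moveLeft (y := PGame.mk α β xL xR) (i := i) hi.2
    · obtain ⟨j', hj⟩ := h3 j
      exact PGame.lf_of_lf_of_le (PGame.lf_moveRight (x := PGame.mk α' β' yL yR) j') hj.2
lemma zero_def : (0 : PGame) = PGame.mk PEmpty PEmpty PEmpty.elim PEmpty.elim := by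
  rfl
lemma one_def : (1 : PGame) = PGame.mk PUnit PEmpty (fun _ => 0) PEmpty.elim := rfl
lemma powHalf_succ_def (n : ℕ) :
    PGame.powHalf (n+1) = PGame.mk PUnit PUnit (fun _ => 0) (fun _ => PGame.powHalf n) := rfl
lemma natGame_succ_def (n : ℕ) :
    natGame (n+1) = PGame.mk PUnit PEmpty (fun _ => natGame n) (fun x => x.elim) := rfl
lemma gameAux_succ (n : ℕ) (l : List Cell) :
    gameAux (n+1) l = PGame.mk {m // m ∈ toadMoves l} {m // m ∈ frogMoves l}
      (fun m => gameAux n m.1) (fun m => gameAux n m.1) := rfl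
lemma frogMoves_EF (w : List Cell) (hw : frogMoves w = []) :
    frogMoves (Cell.E :: Cell.F :: w) = [Cell.F :: Cell.E :: w] := by
  rw [frogMoves_cons, frogMoves_cons, hw]
  rw [show fmatch Cell.E (Cell.F :: w) = [Cell.F :: Cell.E :: w] from rfl]
  rw [fmatch_ne_E (by simp) w]
  simp
lemma mem_of_eq {α : Type*} {x : α} {S T : List α} (h : S = T) (hx : x ∈ S) : x ∈ T :=
  h ▸ hx

/-- The D-family: `L T^a □ T^{c+1} (TF)^b ≈ a`. -/
lemma lemD : ∀ (k : ℕ) (L : List Cell) (a c b n : ℕ), L.length + a ≤ k →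
    Cell.E ∉ L → L.getLast? = some Cell.F →
    wt ((L ++ rep a) ++ Cell.E :: (rep (c+1) ++ tfBlock b)) ≤ n →
    gameAux (n+1) ((L ++ rep a) ++ Cell.E :: (rep (c+1) ++ tfBlock b)) ≈ natGame a := by
  intro k
  induction k using Nat.strong_induction_on with
  | _ k IH =>
  intro L a c b n hk hLE hLF hwt
  have hzT : toadMoves (rep (c+1) ++ tfBlock b) = [] := toadMoves_rep_tf (c+1) b
  have hfrog : frogMoves ((L ++ rep a) ++ Cell.E :: (rep (c+1) ++ tfBlock b)) = [] := by
    rw [frog_append (L ++ rep a) _ (by simp [rep, hLE])]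
    rw [frogMoves_E_rep c b]
    rfl
  cases a with
  | succ a' =>
    -- single toad slide
    have htoad : toadMoves ((L ++ rep (a'+1)) ++ Cell.E :: (rep (c+1) ++ tfBlock b))
        = [(L ++ rep a') ++ Cell.E :: (rep (c+2) ++ tfBlock b)] := by
      rw [List.append_assoc, toad_append L _ hLE
        (Or.inr ⟨rep a' ++ Cell.E :: (rep (c+1) ++ tfBlock b), by simp [rep, List.replicate_succ]⟩)]
      rw [toadMoves_rep_E a' _ hzT (by
        intro r h
        have : (rep (c+1) ++ tfBlock b).head? = some Cell.F := by rw [h]; rfl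
        rw [show (rep (c+1) ++ tfBlock b).head? = some Cell.T by simp [rep, List.replicate_succ]]
          at this
        simp at this)]
      have h2 : Cell.T :: (rep (c+1) ++ tfBlock b) = rep (c+2) ++ tfBlock b := by
        simp [rep, List.replicate_succ]
      simp [h2]
    have hmem : (L ++ rep a') ++ Cell.E :: (rep (c+2) ++ tfBlock b)
        ∈ toadMoves ((L ++ rep (a'+1)) ++ Cell.E :: (rep (c+1) ++ tfBlock b)) := by
      rw [htoad]; exact List.mem_singleton_self _
    have hwt' := (move_spec _ _ (Or.inl hmem)).2.2
    obtain ⟨n', rfl⟩ : ∃ n', n = n' + 1 := ⟨n-1, by omega⟩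
    have hrec : gameAux (n'+1) ((L ++ rep a') ++ Cell.E :: (rep (c+2) ++ tfBlock b))
        ≈ natGame a' :=
      by
        have h := IH (L.length + a') (by omega) L a' (c+1) b n' (le_refl _) hLE hLF
          (by rw [show c+1+1 = c+2 from rfl]; omega)
        rwa [show c+1+1 = c+2 from rfl] at h
    rw [gameAux_succ, natGame_succ_def]
    refine mk_equiv_mk ?_ ?_ ?_ ?_
    · rintro ⟨m, hm⟩
      have hmP : m = (L ++ rep a') ++ Cell.E :: (rep (c+2) ++ tfBlock b) := by
        simpa using mem_of_eq htoad hm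
      subst hmP
      exact ⟨PUnit.unit, hrec⟩
    · intro _
      exact ⟨⟨_, hmem⟩, hrec⟩
    · rintro ⟨m, hm⟩
      exact absurd (mem_of_eq hfrog hm) List.not_mem_nil
    · intro j'
      exact j'.elim
  | zero =>
    -- value 0
    have hnorm : (L ++ rep 0) = L := by simp [rep]
    rw [hnorm] at hfrog hwt ⊢
    have hEz : toadMoves (Cell.E :: (rep (c+1) ++ tfBlock b)) = [] := by
      rw [toadMoves_E, hzT]; rfl
    rcases toad_append_E L (rep (c+1) ++ tfBlock b) hLE hLF with htoad | ⟨M, hME, hMeq, htoad⟩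
    · -- no left moves at all
      rw [hEz] at htoad
      simp only [List.map_nil] at htoad
      rw [gameAux_succ, show natGame 0 = PGame.mk PEmpty PEmpty PEmpty.elim PEmpty.elim from rfl]
      refine mk_equiv_mk ?_ ?_ ?_ ?_
      · rintro ⟨m, hm⟩; exact absurd (mem_of_eq htoad hm) List.not_mem_nil
      · intro i'; exact i'.elim
      · rintro ⟨m, hm⟩; exact absurd (mem_of_eq hfrog hm) List.not_mem_nil
      · intro j'; exact j'.elim
    · -- a jump into L, reversible out
      rw [hEz] at htoad
      simp only [List.map_nil] at htoad
      have hmemJ : M ++ Cell.E :: Cell.F :: Cell.T :: (rep (c+1) ++ tfBlock b)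
          ∈ toadMoves (L ++ Cell.E :: (rep (c+1) ++ tfBlock b)) := by
        rw [htoad]; exact List.mem_singleton_self _
      have hwtJ := (move_spec _ _ (Or.inl hmemJ)).2.2
      have hTz : Cell.T :: (rep (c+1) ++ tfBlock b) = rep (c+2) ++ tfBlock b := by
        simp [rep, List.replicate_succ]
      have hfJ : frogMoves (M ++ Cell.E :: Cell.F :: Cell.T :: (rep (c+1) ++ tfBlock b))
          = [M ++ Cell.F :: Cell.E :: Cell.T :: (rep (c+1) ++ tfBlock b)] := by
        rw [frog_append M _ hME]
        rw [frogMoves_EF _ (by rw [hTz]; exact frogMoves_rep_tf (c+2) b)]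
        rfl
      have hmemD' : M ++ Cell.F :: Cell.E :: Cell.T :: (rep (c+1) ++ tfBlock b)
          ∈ frogMoves (M ++ Cell.E :: Cell.F :: Cell.T :: (rep (c+1) ++ tfBlock b)) := by
        rw [hfJ]; exact List.mem_singleton_self _
      have hwtD' := (move_spec _ _ (Or.inr hmemD')).2.2
      obtain ⟨n₁, rfl⟩ : ∃ n₁, n = n₁ + 1 := ⟨n-1, by omega⟩
      obtain ⟨n₂, rfl⟩ : ∃ n₂, n₁ = n₂ + 1 := ⟨n₁-1, by omega⟩
      have hD'form : M ++ Cell.F :: Cell.E :: Cell.T :: (rep (c+1) ++ tfBlock b)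
          = ((M ++ [Cell.F]) ++ rep 0) ++ Cell.E :: (rep (c+2) ++ tfBlock b) := by
        simp [rep, hTz]
      have hrec : gameAux (n₂+1) (M ++ Cell.F :: Cell.E :: Cell.T :: (rep (c+1) ++ tfBlock b))
          ≈ natGame 0 := by
        rw [hD'form]
        refine IH (M.length + 1)
          (by have := congrArg List.length hMeq; simp at this; omega)
          (M ++ [Cell.F]) 0 (c+1) b n₂ (by simp)
          (by simp [hME]) (by simp) ?_
        rw [← hD'form]; omega
      constructor
      · -- ≤ 0
        show _ ≤ (0 : PGame)
        rw [PGame.le_zero]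
        rintro ⟨m, hm⟩
        have hmJ : m = M ++ Cell.E :: Cell.F :: Cell.T :: (rep (c+1) ++ tfBlock b) := by
          simpa using mem_of_eq htoad hm
        subst hmJ
        exact ⟨⟨_, hmemD'⟩, hrec.1⟩
      · -- 0 ≤ : no right moves
        show (0 : PGame) ≤ _
        rw [zero_def, gameAux_succ, PGame.mk_le_mk]
        refine ⟨fun i => i.elim, ?_⟩
        rintro ⟨m, hm⟩
        exact absurd (mem_of_eq hfrog hm) List.not_mem_nil
lemma lemD0 (L : List Cell) (b n : ℕ) (hLE : Cell.E ∉ L) (hLF : L.getLast? = some Cell.F)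
    (hwt : wt (L ++ Cell.E :: Cell.T :: tfBlock b) ≤ n) :
    gameAux (n+1) (L ++ Cell.E :: Cell.T :: tfBlock b) ≈ natGame 0 := by
  have hform : (L ++ rep 0) ++ Cell.E :: (rep (0+1) ++ tfBlock b)
      = L ++ Cell.E :: Cell.T :: tfBlock b := by simp [rep]
  have h := lemD L.length L 0 0 b n (by omega) hLE hLF (by rw [hform]; exact hwt)
  rwa [hform] at h

/-- The Y-family: `L T □ (TF)^b ≈ (1/2)^b`. -/
lemma lemY : ∀ (b : ℕ) (L : List Cell) (n : ℕ), Cell.E ∉ L → L.getLast? = some Cell.F →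
    wt (L ++ Cell.T :: Cell.E :: tfBlock b) ≤ n →
    gameAux (n+1) (L ++ Cell.T :: Cell.E :: tfBlock b) ≈ PGame.powHalf b := by
  intro b
  induction b with
  | zero =>
    intro L n hLE hLF hwt
    have htoad : toadMoves (L ++ Cell.T :: Cell.E :: tfBlock 0)
        = [L ++ Cell.E :: Cell.T :: tfBlock 0] := by
      rw [toad_append L _ hLE (Or.inr ⟨_, rfl⟩)]
      rw [show Cell.T :: Cell.E :: tfBlock 0 = rep (0+1) ++ Cell.E :: tfBlock 0 by simp [rep]]
      rw [toadMoves_rep_E 0 (tfBlock 0) (toadMoves_tfBlock 0) (by intro r h; cases h)]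
      simp [rep]
    have hfrog : frogMoves (L ++ Cell.T :: Cell.E :: tfBlock 0) = [] := by
      rw [frog_append L _ hLE]
      rw [show (Cell.T :: Cell.E :: tfBlock 0) = [Cell.T, Cell.E] from rfl]
      rfl
    have hmem : L ++ Cell.E :: Cell.T :: tfBlock 0
        ∈ toadMoves (L ++ Cell.T :: Cell.E :: tfBlock 0) := by
      rw [htoad]; exact List.mem_singleton_self _
    have hwt' := (move_spec _ _ (Or.inl hmem)).2.2
    obtain ⟨n', rfl⟩ : ∃ n', n = n' + 1 := ⟨n-1, by omega⟩
    have hrec : gameAux (n'+1) (L ++ Cell.E :: Cell.T :: tfBlock 0) ≈ natGame 0 :=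
      lemD0 L 0 n' hLE hLF (by omega)
    rw [gameAux_succ, show PGame.powHalf 0 = PGame.mk PUnit PEmpty (fun _ => 0) PEmpty.elim from rfl]
    refine mk_equiv_mk ?_ ?_ ?_ ?_
    · rintro ⟨m, hm⟩
      have hmP : m = L ++ Cell.E :: Cell.T :: tfBlock 0 := by
        simpa using mem_of_eq htoad hm
      subst hmP
      exact ⟨PUnit.unit, hrec⟩
    · intro _
      exact ⟨⟨_, hmem⟩, hrec⟩
    · rintro ⟨m, hm⟩
      exact absurd (mem_of_eq hfrog hm) List.not_mem_nil
    · intro j'; exact j'.elim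
  | succ b ihb =>
    intro L n hLE hLF hwt
    have htoad : toadMoves (L ++ Cell.T :: Cell.E :: tfBlock (b+1))
        = [L ++ Cell.E :: Cell.T :: tfBlock (b+1)] := by
      rw [toad_append L _ hLE (Or.inr ⟨_, rfl⟩)]
      rw [show Cell.T :: Cell.E :: tfBlock (b+1) = rep (0+1) ++ Cell.E :: tfBlock (b+1) by simp [rep]]
      rw [toadMoves_rep_E 0 (tfBlock (b+1)) (toadMoves_tfBlock (b+1))
        (by rw [tfBlock_succ]; intro r h; cases h)]
      simp [rep]
    have hfrog : frogMoves (L ++ Cell.T :: Cell.E :: tfBlock (b+1))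
        = [(L ++ [Cell.T, Cell.F]) ++ Cell.T :: Cell.E :: tfBlock b] := by
      rw [frog_append L _ hLE]
      rw [frogMoves_cons, frogMoves_E_tf b, fmatch_ne_E (by simp) _]
      simp
    have hmemL : L ++ Cell.E :: Cell.T :: tfBlock (b+1)
        ∈ toadMoves (L ++ Cell.T :: Cell.E :: tfBlock (b+1)) := by
      rw [htoad]; exact List.mem_singleton_self _
    have hmemR : (L ++ [Cell.T, Cell.F]) ++ Cell.T :: Cell.E :: tfBlock b
        ∈ frogMoves (L ++ Cell.T :: Cell.E :: tfBlock (b+1)) := by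
      rw [hfrog]; exact List.mem_singleton_self _
    have hwtL := (move_spec _ _ (Or.inl hmemL)).2.2
    have hwtR := (move_spec _ _ (Or.inr hmemR)).2.2
    obtain ⟨n', rfl⟩ : ∃ n', n = n' + 1 := ⟨n-1, by omega⟩
    have hrecL : gameAux (n'+1) (L ++ Cell.E :: Cell.T :: tfBlock (b+1)) ≈ natGame 0 :=
      lemD0 L (b+1) n' hLE hLF (by omega)
    have hrecR : gameAux (n'+1) ((L ++ [Cell.T, Cell.F]) ++ Cell.T :: Cell.E :: tfBlock b)
        ≈ PGame.powHalf b := by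
      refine ihb (L ++ [Cell.T, Cell.F]) n' (by simp [hLE]) ?_ (by omega)
      rw [List.getLast?_append]
      rfl
    rw [gameAux_succ, powHalf_succ_def]
    refine mk_equiv_mk ?_ ?_ ?_ ?_
    · rintro ⟨m, hm⟩
      have hmP : m = L ++ Cell.E :: Cell.T :: tfBlock (b+1) := by
        simpa using mem_of_eq htoad hm
      subst hmP
      exact ⟨PUnit.unit, hrecL⟩
    · intro _
      exact ⟨⟨_, hmemL⟩, hrecL⟩
    · rintro ⟨m, hm⟩
      have hmP : m = (L ++ [Cell.T, Cell.F]) ++ Cell.T :: Cell.E :: tfBlock b := by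
        simpa using mem_of_eq hfrog hm
      subst hmP
      exact ⟨PUnit.unit, hrecR⟩
    · intro _
      exact ⟨⟨_, hmemR⟩, hrecR⟩

/-- `L T^a □ (TF)^b = { a-1 | (1/2)^(b-1) }`
`L` a `{T,F}`-string ending in `F`. -/
theorem LTabox_TFb (a b : ℕ) (ha : 1 ≤ a) (hb : 1 ≤ b)
    (L : List Cell) (hLE : Cell.E ∉ L) (hL : L.getLast? = some Cell.F) :
    tfGame (L ++ List.replicate a Cell.T ++ [Cell.E] ++ tfBlock b) ≈
      gmk (intGame ((a : ℤ) - 1)) (PGame.powHalf (b - 1)) := by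
  obtain ⟨a', rfl⟩ : ∃ a', a = a' + 1 := ⟨a-1, by omega⟩
  obtain ⟨b', rfl⟩ : ∃ b', b = b' + 1 := ⟨b-1, by omega⟩
  have hint : intGame ((↑(a'+1) : ℤ) - 1) = natGame a' := by
    have h1 : ((↑(a'+1) : ℤ) - 1) = Int.ofNat a' := by rw [Int.ofNat_eq_natCast]; omega
    rw [h1]
    rfl
  have hpow : (b'+1) - 1 = b' := rfl
  rw [hint, hpow]
  have hform : L ++ List.replicate (a'+1) Cell.T ++ [Cell.E] ++ tfBlock (b'+1)
      = L ++ (rep (a'+1) ++ Cell.E :: tfBlock (b'+1)) := by simp [rep]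
  rw [tfGame, hform]
  -- move computations
  have htoad : toadMoves (L ++ (rep (a'+1) ++ Cell.E :: tfBlock (b'+1)))
      = [L ++ (rep a' ++ Cell.E :: Cell.T :: tfBlock (b'+1))] := by
    rw [toad_append L _ hLE (Or.inr ⟨rep a' ++ Cell.E :: tfBlock (b'+1),
      by simp [rep, List.replicate_succ]⟩)]
    rw [toadMoves_rep_E a' (tfBlock (b'+1)) (toadMoves_tfBlock (b'+1))
      (by rw [tfBlock_succ]; intro r h; cases h)]
    rfl
  have hfrog : frogMoves (L ++ (rep (a'+1) ++ Cell.E :: tfBlock (b'+1)))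
      = [(L ++ rep (a'+1) ++ [Cell.F]) ++ Cell.T :: Cell.E :: tfBlock b'] := by
    rw [frog_append L _ hLE, frog_append (rep (a'+1)) _ (E_not_mem_rep _),
      frogMoves_E_tf b']
    simp
  have hmemL : L ++ (rep a' ++ Cell.E :: Cell.T :: tfBlock (b'+1))
      ∈ toadMoves (L ++ (rep (a'+1) ++ Cell.E :: tfBlock (b'+1))) := by
    rw [htoad]; exact List.mem_singleton_self _
  have hmemR : (L ++ rep (a'+1) ++ [Cell.F]) ++ Cell.T :: Cell.E :: tfBlock b'
      ∈ frogMoves (L ++ (rep (a'+1) ++ Cell.E :: tfBlock (b'+1))) := by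
    rw [hfrog]; exact List.mem_singleton_self _
  have hwtL := (move_spec _ _ (Or.inl hmemL)).2.2
  have hwtR := (move_spec _ _ (Or.inr hmemR)).2.2
  obtain ⟨n, hn⟩ : ∃ n, wt (L ++ (rep (a'+1) ++ Cell.E :: tfBlock (b'+1))) = n + 1 :=
    ⟨wt (L ++ (rep (a'+1) ++ Cell.E :: tfBlock (b'+1))) - 1, by omega⟩
  rw [hn]
  have hrecL : gameAux (n+1) (L ++ (rep a' ++ Cell.E :: Cell.T :: tfBlock (b'+1)))
      ≈ natGame a' := by
    have hform2 : (L ++ rep a') ++ Cell.E :: (rep (0+1) ++ tfBlock (b'+1))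
        = L ++ (rep a' ++ Cell.E :: Cell.T :: tfBlock (b'+1)) := by simp [rep]
    have h := lemD (L.length + a') L a' 0 (b'+1) n (le_refl _) hLE hL
      (by rw [hform2]; omega)
    rwa [hform2] at h
  have hrecR : gameAux (n+1) ((L ++ rep (a'+1) ++ [Cell.F]) ++ Cell.T :: Cell.E :: tfBlock b')
      ≈ PGame.powHalf b' := by
    refine lemY b' (L ++ rep (a'+1) ++ [Cell.F]) n (by simp [rep, hLE]) ?_ (by omega)
    rw [show L ++ rep (a'+1) ++ [Cell.F] = (L ++ rep (a'+1)) ++ [Cell.F] from rfl,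
      List.getLast?_append]
    rfl
  rw [gameAux_succ, show gmk (natGame a') (PGame.powHalf b')
    = PGame.mk PUnit PUnit (fun _ => natGame a') (fun _ => PGame.powHalf b') from rfl]
  refine mk_equiv_mk ?_ ?_ ?_ ?_
  · rintro ⟨m, hm⟩
    have hmP : m = L ++ (rep a' ++ Cell.E :: Cell.T :: tfBlock (b'+1)) := by
      simpa using mem_of_eq htoad hm
    subst hmP
    exact ⟨PUnit.unit, hrecL⟩
  · intro _
    exact ⟨⟨_, hmemL⟩, hrecL⟩
  · rintro ⟨m, hm⟩
    have hmP : m = (L ++ rep (a'+1) ++ [Cell.F]) ++ Cell.T :: Cell.E :: tfBlock b' := by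
      simpa using mem_of_eq hfrog hm
    subst hmP
    exact ⟨PUnit.unit, hrecR⟩
  · intro _
    exact ⟨⟨_, hmemR⟩, hrecR⟩
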